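/- Let η > 0, p ≥ 1, and let x : [0,∞) → ℝ^p be differentiable with each component satisfying x_k'(t) = −η · sgn(x_k(t)) for all t ≥ 0, where sgn is the signum function with sgn(0) = 0. Then x(t) = 0 for all t ≥ max_k |x_k(0)| / η; in particular x(t) → 0 as t → ∞. -/

import Mathlib

open Filter

private lemma signum_stick_not_pos (η : ℝ) (hη : 0 < η) (f : ℝ → ℝ)
    (hf : Differentiable ℝ f)
    (hode : ∀ t, 0 ≤ t → deriv f t = -η * Real.sign (f t))
    {t0 t : ℝ} (ht0 : 0 ≤ t0) (hz : f t0 = 0) (htt : t0 ≤ t) : ¬ 0 < f t := by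
  intro hpos
  have hne : f t ≠ 0 := ne_of_gt hpos
  have ht0t : t0 < t := lt_of_le_of_ne htt (by rintro rfl; exact hne hz)
  set Z : Set ℝ := Set.Icc t0 t ∩ {s | f s = 0} with hZ
  have hZcl : IsClosed Z := isClosed_Icc.inter (isClosed_eq hf.continuous continuous_const)
  have hZne : Z.Nonempty := ⟨t0, ⟨le_refl _, le_of_lt ht0t⟩, hz⟩
  have hZbdd : BddAbove Z := ⟨t, fun s hs => hs.1.2⟩
  have hSZ : sSup Z ∈ Z := hZcl.csSup_mem hZne hZbdd
  have hSt : sSup Z < t := lt_of_le_of_ne hSZ.1.2 (fun h => hne (h ▸ hSZ.2))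
  have ht0S : t0 ≤ sSup Z := hSZ.1.1
  have hposOn : ∀ s ∈ Set.Ioc (sSup Z) t, 0 < f s := by
    intro s hs
    rcases lt_trichotomy (f s) 0 with hneg | hzero | hp
    · have hst : s < t := lt_of_le_of_ne hs.2 (by rintro rfl; exact absurd hneg (not_lt.2 hpos.le))
      have h0 : (0:ℝ) ∈ Set.Ioo (f s) (f t) := ⟨hneg, hpos⟩
      obtain ⟨c, hc, hfc⟩ := intermediate_value_Ioo hst.le hf.continuous.continuousOn h0
      have hcZ : c ∈ Z := ⟨⟨le_trans ht0S (le_trans hs.1.le hc.1.le), hc.2.le⟩, hfc⟩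
      have hcS : c ≤ sSup Z := le_csSup hZbdd hcZ
      exact absurd hcS (not_le.2 (hs.1.trans hc.1))
    · have hsZ : s ∈ Z := ⟨⟨le_trans ht0S hs.1.le, hs.2⟩, hzero⟩
      exact absurd (le_csSup hZbdd hsZ) (not_le.2 hs.1)
    · exact hp
  have hanti : StrictAntiOn f (Set.Icc (sSup Z) t) := by
    apply strictAntiOn_of_deriv_neg (convex_Icc _ t) hf.continuous.continuousOn
    intro s hs
    rw [interior_Icc] at hs
    have hs0 : (0:ℝ) ≤ s := le_trans (le_trans ht0 ht0S) hs.1.le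
    rw [hode s hs0, Real.sign_of_pos (hposOn s ⟨hs.1, hs.2.le⟩)]
    linarith
  have hlt := hanti (Set.left_mem_Icc.2 hSt.le) (Set.right_mem_Icc.2 hSt.le) hSt
  rw [hSZ.2] at hlt
  exact absurd hpos (not_lt.2 hlt.le)

private lemma signum_neg_ode (η : ℝ) (f : ℝ → ℝ) (hf : Differentiable ℝ f)
    (hode : ∀ t, 0 ≤ t → deriv f t = -η * Real.sign (f t)) :
    ∀ t, 0 ≤ t → deriv (fun s => -f s) t = -η * Real.sign (-f t) := by
  intro t ht
  rw [deriv.fun_neg, hode t ht, Real.sign_neg]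
  ring

private lemma signum_stick (η : ℝ) (hη : 0 < η) (f : ℝ → ℝ)
    (hf : Differentiable ℝ f)
    (hode : ∀ t, 0 ≤ t → deriv f t = -η * Real.sign (f t))
    {t0 t : ℝ} (ht0 : 0 ≤ t0) (hz : f t0 = 0) (htt : t0 ≤ t) : f t = 0 := by
  have h1 := signum_stick_not_pos η hη f hf hode ht0 hz htt
  have h2 := signum_stick_not_pos η hη (fun s => -f s) hf.neg
    (signum_neg_ode η f hf hode) ht0 (by simp [hz]) htt
  push_neg at h1 h2
  linarith

private lemma signum_reach_pos (η : ℝ) (hη : 0 < η) (f : ℝ → ℝ)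
    (hf : Differentiable ℝ f)
    (hode : ∀ t, 0 ≤ t → deriv f t = -η * Real.sign (f t))
    (hf0 : 0 < f 0) : ∃ s ∈ Set.Icc (0:ℝ) (f 0 / η), f s = 0 := by
  set T := f 0 / η with hT
  have hTpos : 0 < T := div_pos hf0 hη
  by_contra h
  push_neg at h
  have hposOn : ∀ s ∈ Set.Icc (0:ℝ) T, 0 < f s := by
    intro s hs
    rcases lt_trichotomy (f s) 0 with hneg | hzero | hp
    · have hs0 : 0 < s := lt_of_le_of_ne hs.1 (by rintro rfl; linarith)
      have : (0:ℝ) ∈ Set.Ioo (f s) (f 0) := ⟨hneg, hf0⟩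
      obtain ⟨c, hc, hfc⟩ := intermediate_value_Ioo' hs0.le hf.continuous.continuousOn this
      exact absurd hfc (h c ⟨hc.1.le, hc.2.le.trans hs.2⟩)
    · exact absurd hzero (h s hs)
    · exact hp
  obtain ⟨c, hc, hslope⟩ := exists_deriv_eq_slope f hTpos hf.continuous.continuousOn
    (hf.differentiableOn)
  have hderiv : deriv f c = -η := by
    rw [hode c hc.1.le, Real.sign_of_pos (hposOn c ⟨hc.1.le, hc.2.le⟩)]; ring
  rw [hderiv] at hslope
  have hηT : η * T = f 0 := by rw [hT]; field_simp
  have h1 : f T - f 0 = -η * (T - 0) :=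
    (div_eq_iff (by simpa using ne_of_gt hTpos)).1 hslope.symm
  have hfT : f T = 0 := by linarith
  exact h T ⟨hTpos.le, le_refl _⟩ hfT

private lemma signum_scalar (η : ℝ) (hη : 0 < η) (f : ℝ → ℝ)
    (hf : Differentiable ℝ f)
    (hode : ∀ t, 0 ≤ t → deriv f t = -η * Real.sign (f t)) :
    ∀ t, |f 0| / η ≤ t → f t = 0 := by
  intro t ht
  rcases lt_trichotomy (f 0) 0 with hneg | hzero | hpos
  · -- apply positive case to -f
    obtain ⟨s, hs, hfs⟩ := signum_reach_pos η hη (fun u => -f u) hf.neg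
      (signum_neg_ode η f hf hode) (by show (0:ℝ) < -f 0; linarith)
    have hfs0 : f s = 0 := by have : -f s = 0 := hfs; linarith
    have hst : s ≤ t := by
      have hle : -f 0 / η ≤ t := by rwa [abs_of_neg hneg] at ht
      exact le_trans hs.2 hle
    exact signum_stick η hη f hf hode hs.1 hfs0 hst
  · exact signum_stick η hη f hf hode (le_refl 0) hzero
      (le_trans (by positivity) ht)
  · obtain ⟨s, hs, hfs⟩ := signum_reach_pos η hη f hf hode hpos
    have hst : s ≤ t := by
      have : f 0 / η ≤ t := by rwa [abs_of_pos hpos] at ht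
      exact le_trans hs.2 this
    exact signum_stick η hη f hf hode hs.1 hfs hst

/-- Finite-time convergence of the single-integrator signum dynamics `x' = −η sgn(x)`
(componentwise): `x(t) = 0` for all `t ≥ maxₖ |xₖ(0)|/η`, and in particular `x(t) → 0`. -/
theorem single_integrator_signum_finite_time
    (p : ℕ) (hp : 1 ≤ p) (η : ℝ) (hη : 0 < η)
    (x : ℝ → (Fin p → ℝ)) (hx : Differentiable ℝ x)
    (hode : ∀ t : ℝ, 0 ≤ t → ∀ k, deriv (fun s => x s k) t = -η * Real.sign (x t k)) :
    (∀ t : ℝ, (∀ k, |x 0 k| / η ≤ t) → x t = 0) ∧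
    Tendsto x atTop (nhds 0) := by
  have key : ∀ t : ℝ, (∀ k, |x 0 k| / η ≤ t) → x t = 0 := by
    intro t ht
    funext k
    exact signum_scalar η hη (fun s => x s k)
      (differentiable_pi.mp hx k)
      (fun s hs => hode s hs k) t (ht k)
  exact ⟨key, by
    have : Nonempty (Fin p) := ⟨⟨0, hp⟩⟩
    set M := Finset.univ.sup' (Finset.univ_nonempty) (fun k : Fin p => |x 0 k| / η) with hM
    have heq : x =ᶠ[atTop] (fun _ => (0 : Fin p → ℝ)) := by
      filter_upwards [eventually_ge_atTop M] with t htM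
      exact key t (fun k => le_trans (Finset.le_sup' (fun k : Fin p => |x 0 k| / η) (Finset.mem_univ k)) htM)
    exact Tendsto.congr' heq.symm tendsto_const_nhds⟩
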